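/- Let D be a finite-dimensional division ℚ-algebra and G a finite subgroup of the unit group Dˣ. If G is isomorphic to Q₈ (the quaternion group of order 8) or to SL(2,3) (the 2×2 matrices of determinant 1 over the field with 3 elements), then the ℚ-subalgebra of D generated by G is isomorphic as a ℚ-algebra to ℍ[ℚ,−1,−1]; if G is isomorphic to the dicyclic group of order 12 (C₃ ⋊ C₄ with the C₄-action by inversion), then the ℚ-subalgebra of D generated by G is isomorphic as a ℚ-algebra to ℍ[ℚ,−1,−3]. -/

import Mathlib

open Quaternion Pointwise

set_option maxRecDepth 200000
set_option maxHeartbeats 1000000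

namespace Statement16

def genStep {Γ : Type*} [Monoid Γ] [DecidableEq Γ] (g s : Finset Γ) : Finset Γ := s ∪ s * g

theorem genStep_pred {Γ : Type*} [Monoid Γ] [DecidableEq Γ] {P : Γ → Prop}
    (hP : ∀ u v, P u → P v → P (u * v)) {g s : Finset Γ}
    (hg : ∀ x ∈ g, P x) (hs : ∀ x ∈ s, P x) : ∀ x ∈ genStep g s, P x := by
  intro x hx
  rcases Finset.mem_union.1 hx with h | h
  · exact hs x h
  · obtain ⟨u, hu, v, hv, rfl⟩ := Finset.mem_mul.1 h
    exact hP u v (hs u hu) (hg v hv)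

theorem all_pred {Γ : Type*} [Monoid Γ] [Fintype Γ] [DecidableEq Γ] {P : Γ → Prop}
    (hP : ∀ u v, P u → P v → P (u * v)) {g s : Finset Γ} (n : ℕ)
    (hg : ∀ x ∈ g, P x) (hs : ∀ x ∈ s, P x) (huniv : (genStep g)^[n] s = Finset.univ) :
    ∀ x, P x := by
  have key : ∀ m, ∀ x ∈ (genStep g)^[m] s, P x := by
    intro m
    induction m with
    | zero => exact hs
    | succ m ih => rw [Function.iterate_succ_apply']; exact genStep_pred hP hg ih
  exact fun x => key n x (huniv ▸ Finset.mem_univ x)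


abbrev SL23 := Matrix.SpecialLinearGroup (Fin 2) (ZMod 3)

instance : DecidableEq SL23 :=
  fun aa bb => decidable_of_iff (aa.1 = bb.1) Subtype.ext_iff.symm

def Ig : SL23 := ⟨!![0, -1; 1, 0], by decide⟩
def Jg : SL23 := ⟨!![1, 1; 1, -1], by decide⟩
def Wg : SL23 := ⟨!![1, 1; 0, 1], by decide⟩
def Ng : SL23 := ⟨!![-1, 0; 0, -1], by decide⟩

variable {D : Type*} [DivisionRing D] [Algebra ℚ D]

theorem neg_one_of {z : D} (h2 : z * z = 1) (h1 : z ≠ 1) : z = -1 := by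
  have h : (z - 1) * (z + 1) = 0 := by
    have : (z - 1) * (z + 1) = z * z - 1 := by noncomm_ring
    rw [this, h2, sub_self]
  rcases mul_eq_zero.1 h with h | h
  · exact absurd (sub_eq_zero.1 h) h1
  · exact eq_neg_of_add_eq_zero_left h

theorem i_mem_range {c₁ c₂ : ℚ} (B : QuaternionAlgebra.Basis D c₁ 0 c₂) :
    B.i ∈ B.liftHom.range :=
  ⟨⟨0, 1, 0, 0⟩, by simp [QuaternionAlgebra.Basis.liftHom_apply, QuaternionAlgebra.Basis.lift]⟩

theorem j_mem_range {c₁ c₂ : ℚ} (B : QuaternionAlgebra.Basis D c₁ 0 c₂) :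
    B.j ∈ B.liftHom.range :=
  ⟨⟨0, 0, 1, 0⟩, by simp [QuaternionAlgebra.Basis.liftHom_apply, QuaternionAlgebra.Basis.lift]⟩

theorem scaffold {c₁ c₂ : ℚ} (h0 : ∀ z : ℍ[ℚ,c₁,c₂], z * star z = 0 → z = 0)
    (B : QuaternionAlgebra.Basis D c₁ 0 c₂) (S : Set D)
    (hS : ∀ s ∈ S, s ∈ B.liftHom.range)
    (hi : B.i ∈ Algebra.adjoin ℚ S) (hj : B.j ∈ Algebra.adjoin ℚ S) :
    Nonempty (↥(Algebra.adjoin ℚ S) ≃ₐ[ℚ] ℍ[ℚ,c₁,c₂]) := by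
  set φ := B.liftHom with hφ
  have hinj : Function.Injective φ := by
    rw [injective_iff_map_eq_zero]
    intro z hz
    have h2 : z * star z = algebraMap ℚ _ ((z * star z).re) := by
      rw [QuaternionAlgebra.coe_algebraMap]; exact QuaternionAlgebra.mul_star_eq_coe z
    have h1 : φ (z * star z) = 0 := by rw [map_mul, hz, zero_mul]
    rw [h2, AlgHom.commutes] at h1
    have hre : ((z * star z).re) = 0 := (algebraMap ℚ D).injective (by rw [h1, map_zero])
    exact h0 z (by rw [h2, hre, map_zero])
  have hk : B.k ∈ Algebra.adjoin ℚ S := by rw [← B.i_mul_j]; exact mul_mem hi hj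
  have hrange : Algebra.adjoin ℚ S = φ.range := by
    apply le_antisymm
    · exact Algebra.adjoin_le hS
    · rintro x hx
      obtain ⟨z, rfl⟩ := AlgHom.mem_range (φ := φ) |>.1 hx
      show B.lift z ∈ _
      unfold QuaternionAlgebra.Basis.lift
      exact add_mem (add_mem (add_mem (Subalgebra.algebraMap_mem _ _)
        (Subalgebra.smul_mem _ hi _)) (Subalgebra.smul_mem _ hj _)) (Subalgebra.smul_mem _ hk _)
  exact ⟨(Subalgebra.equivOfEq _ _ hrange).trans (AlgEquiv.ofInjective φ hinj).symm⟩

theorem h0_gen {c₁ c₂ : ℚ} (hc₁ : c₁ < 0) (hc₂ : c₂ < 0) :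
    ∀ z : ℍ[ℚ,c₁,c₂], z * star z = 0 → z = 0 := by
  intro z h
  have hre : (z * star z).re = 0 := by rw [h]; rfl
  rw [QuaternionAlgebra.re_mul] at hre
  have h1 : (star z).1 = z.1 := by simp
  have h2 : (star z).2 = -z.2 := by simp
  have h3 : (star z).3 = -z.3 := by simp
  have h4 : (star z).4 = -z.4 := by simp
  rw [h1, h2, h3, h4] at hre
  have hK : (0:ℚ) < c₁ * c₂ := mul_pos_of_neg_of_neg hc₁ hc₂
  have key : z.1 ^ 2 + (-c₁) * z.2 ^ 2 + (-c₂) * z.3 ^ 2 + (c₁ * c₂) * z.4 ^ 2 = 0 := by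
    linear_combination hre
  have n1 : (0:ℚ) ≤ z.1 ^ 2 := sq_nonneg _
  have n2 : (0:ℚ) ≤ (-c₁) * z.2 ^ 2 := mul_nonneg (by linarith) (sq_nonneg _)
  have n3 : (0:ℚ) ≤ (-c₂) * z.3 ^ 2 := mul_nonneg (by linarith) (sq_nonneg _)
  have n4 : (0:ℚ) ≤ (c₁ * c₂) * z.4 ^ 2 := mul_nonneg hK.le (sq_nonneg _)
  have e1 : z.1 = 0 := by
    have : z.1 ^ 2 = 0 := by linarith
    exact pow_eq_zero_iff two_ne_zero |>.1 this
  have e2 : z.2 = 0 := by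
    have h' : (-c₁) * z.2 ^ 2 = 0 := by linarith
    have := (mul_eq_zero.1 h').resolve_left (ne_of_gt (by linarith : (0:ℚ) < -c₁))
    exact pow_eq_zero_iff two_ne_zero |>.1 this
  have e3 : z.3 = 0 := by
    have h' : (-c₂) * z.3 ^ 2 = 0 := by linarith
    have := (mul_eq_zero.1 h').resolve_left (ne_of_gt (by linarith : (0:ℚ) < -c₂))
    exact pow_eq_zero_iff two_ne_zero |>.1 this
  have e4 : z.4 = 0 := by
    have h' : (c₁ * c₂) * z.4 ^ 2 = 0 := by linarith
    have := (mul_eq_zero.1 h').resolve_left (ne_of_gt hK)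
    exact pow_eq_zero_iff two_ne_zero |>.1 this
  ext <;> simp [e1, e2, e3, e4]

theorem caseQ8 (G : Subgroup Dˣ) (e : ↥G ≃* QuaternionGroup 2) :
    Nonempty (↥(Algebra.adjoin ℚ ((fun u : Dˣ => (u : D)) '' (G : Set Dˣ))) ≃ₐ[ℚ] ℍ[ℚ,-1,-1]) := by
  have hf : ∀ γ : QuaternionGroup 2,
      ((Units.coeHom D).comp (G.subtype.comp e.symm.toMonoidHom)) γ = ((e.symm γ : Dˣ) : D) :=
    fun γ => rfl
  generalize hfd : (Units.coeHom D).comp (G.subtype.comp e.symm.toMonoidHom) = f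
  rw [hfd] at hf
  have hfinj : Function.Injective f := by
    rw [← hfd]
    exact fun u v h => e.symm.injective (Subtype.ext (Units.ext h))
  have hfne : ∀ {u v : QuaternionGroup 2}, u ≠ v → f u ≠ f v :=
    fun h h' => h (hfinj h')
  have hm1 : f (.a 2) = -1 := by
    refine neg_one_of ?_ ?_
    · rw [← map_mul, show (QuaternionGroup.a 2 * .a 2 : QuaternionGroup 2) = 1 by decide, map_one]
    · rw [show (1 : D) = f 1 from (map_one f).symm]
      exact hfne (by decide)
  have hxx : f (.a 1) * f (.a 1) = (-1 : ℚ) • (1 : D) := by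
    rw [← map_mul, show (QuaternionGroup.a 1 * .a 1 : QuaternionGroup 2) = .a 2 by decide, hm1]
    simp
  have hyy : f (.xa 0) * f (.xa 0) = (-1 : ℚ) • (1 : D) := by
    rw [← map_mul, show (QuaternionGroup.xa 0 * .xa 0 : QuaternionGroup 2) = .a 2 by decide, hm1]
    simp
  have hk : f (.a 1) * f (.xa 0) = -(f (.xa 0) * f (.a 1)) := by
    calc f (.a 1) * f (.xa 0) = f (.a 1 * .xa 0) := (map_mul f _ _).symm
    _ = f (.a 2 * (.xa 0 * .a 1)) := by
        rw [show (QuaternionGroup.a 1 * .xa 0 : QuaternionGroup 2)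
          = .a 2 * (.xa 0 * .a 1) by decide]
    _ = f (.a 2) * (f (.xa 0) * f (.a 1)) := by rw [map_mul, map_mul]
    _ = -(f (.xa 0) * f (.a 1)) := by rw [hm1, neg_mul, one_mul]
  have hyx : f (.xa 0) * f (.a 1) = -(f (.a 1) * f (.xa 0)) := by rw [hk, neg_neg]
  set B : QuaternionAlgebra.Basis D (-1 : ℚ) 0 (-1 : ℚ) :=
    { i := f (.a 1), j := f (.xa 0), k := f (.a 1) * f (.xa 0)
      i_mul_i := by rw [hxx]; simp, j_mul_j := hyy, i_mul_j := rfl, j_mul_i := by rw [hyx]; simp } with hB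
  have hBi : B.i = f (.a 1) := by rw [hB]
  have hBj : B.j = f (.xa 0) := by rw [hB]
  have hmem : ∀ γ : QuaternionGroup 2, f γ ∈ B.liftHom.range := by
    refine all_pred (g := {.a 1, .xa 0}) (s := {1})
      (fun u v hu hv => by rw [map_mul]; exact mul_mem hu hv) 6 ?_ ?_ (by decide)
    · intro g hg
      rcases Finset.mem_insert.1 hg with rfl | hg
      · rw [← hBi]; exact i_mem_range B
      · rw [Finset.mem_singleton.1 hg, ← hBj]
        exact j_mem_range B
    · intro g hg
      rw [Finset.mem_singleton.1 hg, map_one]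
      exact one_mem _
  have hS : ∀ s ∈ (fun u : Dˣ => (u : D)) '' (G : Set Dˣ), s ∈ B.liftHom.range := by
    rintro s ⟨u, hu, rfl⟩
    have h : ((u : Dˣ) : D) = f (e ⟨u, hu⟩) := by rw [hf, e.symm_apply_apply]
    rw [show (fun u : Dˣ => (u : D)) u = ((u : Dˣ) : D) from rfl, h]
    exact hmem _
  have hi : B.i ∈ Algebra.adjoin ℚ ((fun u : Dˣ => (u : D)) '' (G : Set Dˣ)) := by
    rw [hBi]
    exact Algebra.subset_adjoin ⟨(e.symm (.a 1) : Dˣ), (e.symm (.a 1)).2, (hf _).symm⟩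
  have hj : B.j ∈ Algebra.adjoin ℚ ((fun u : Dˣ => (u : D)) '' (G : Set Dˣ)) := by
    rw [hBj]
    exact Algebra.subset_adjoin ⟨(e.symm (.xa 0) : Dˣ), (e.symm (.xa 0)).2, (hf _).symm⟩
  exact scaffold (h0_gen (by norm_num) (by norm_num)) B _ hS hi hj

theorem caseDic (G : Subgroup Dˣ) (e : ↥G ≃* QuaternionGroup 3) :
    Nonempty (↥(Algebra.adjoin ℚ ((fun u : Dˣ => (u : D)) '' (G : Set Dˣ))) ≃ₐ[ℚ] ℍ[ℚ,-1,-3]) := by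
  have hf : ∀ γ : QuaternionGroup 3,
      ((Units.coeHom D).comp (G.subtype.comp e.symm.toMonoidHom)) γ = ((e.symm γ : Dˣ) : D) :=
    fun γ => rfl
  generalize hfd : (Units.coeHom D).comp (G.subtype.comp e.symm.toMonoidHom) = f
  rw [hfd] at hf
  have hfinj : Function.Injective f := by
    rw [← hfd]
    exact fun u v h => e.symm.injective (Subtype.ext (Units.ext h))
  have hfne : ∀ {u v : QuaternionGroup 3}, u ≠ v → f u ≠ f v :=
    fun h h' => h (hfinj h')
  have hm1 : f (.a 3) = -1 := by
    refine neg_one_of ?_ ?_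
    · rw [← map_mul, show (QuaternionGroup.a 3 * .a 3 : QuaternionGroup 3) = 1 by decide, map_one]
    · rw [show (1 : D) = f 1 from (map_one f).symm]
      exact hfne (by decide)
  have hxx : f (.xa 0) * f (.xa 0) = (-1 : ℚ) • (1 : D) := by
    rw [← map_mul, show (QuaternionGroup.xa 0 * .xa 0 : QuaternionGroup 3) = .a 3 by decide, hm1]
    simp
  have hα3 : f (.a 1) * f (.a 1) * f (.a 1) = -1 := by
    rw [← map_mul, ← map_mul,
      show (QuaternionGroup.a 1 * .a 1 * .a 1 : QuaternionGroup 3) = .a 3 by decide, hm1]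
  have hαne : f (.a 1) ≠ -1 := by
    rw [← hm1]
    exact hfne (by decide)
  have hαsq : f (.a 1) * f (.a 1) = f (.a 1) - 1 := by
    have expand : (f (.a 1) + 1) * (f (.a 1) * f (.a 1) - f (.a 1) + 1)
        = f (.a 1) * f (.a 1) * f (.a 1) + 1 := by noncomm_ring
    have hfac : (f (.a 1) + 1) * (f (.a 1) * f (.a 1) - f (.a 1) + 1) = 0 := by
      rw [expand, hα3, neg_add_cancel]
    have h2 := (mul_eq_zero.1 hfac).resolve_left
      (fun h => hαne (eq_neg_of_add_eq_zero_left h))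
    have h3 : f (.a 1) * f (.a 1) - (f (.a 1) - 1) = 0 := by rw [← h2]; noncomm_ring
    exact sub_eq_zero.1 h3
  have hβα : f (.a 5) * f (.a 1) = 1 := by
    rw [← map_mul, show (QuaternionGroup.a 5 * .a 1 : QuaternionGroup 3) = 1 by decide, map_one]
  have hα1α : f (.a 1) * (1 - f (.a 1)) = 1 := by
    rw [mul_sub, mul_one, hαsq, sub_sub_cancel]
  have hβ : f (.a 5) = 1 - f (.a 1) := by
    calc f (.a 5) = f (.a 5) * (f (.a 1) * (1 - f (.a 1))) := by rw [hα1α, mul_one]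
    _ = (f (.a 5) * f (.a 1)) * (1 - f (.a 1)) := by rw [mul_assoc]
    _ = 1 - f (.a 1) := by rw [hβα, one_mul]
  have hyy : (2 * f (.a 1) - 1) * (2 * f (.a 1) - 1) = (-3 : ℚ) • (1 : D) := by
    have expand : (2 * f (.a 1) - 1) * (2 * f (.a 1) - 1)
        = 4 * (f (.a 1) * f (.a 1)) - 4 * f (.a 1) + 1 := by noncomm_ring
    have hsm : ((-3 : ℚ) • (1 : D)) = -3 := by
      rw [Algebra.smul_def]
      norm_num
    rw [expand, hαsq, hsm]
    noncomm_ring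
    simp
  have hxα : f (.xa 0) * f (.a 1) = f (.a 5) * f (.xa 0) := by
    rw [← map_mul, show (QuaternionGroup.xa 0 * .a 1 : QuaternionGroup 3)
      = .a 5 * .xa 0 by decide, map_mul]
  have hxj : f (.xa 0) * (2 * f (.a 1) - 1) = -((2 * f (.a 1) - 1) * f (.xa 0)) := by
    calc f (.xa 0) * (2 * f (.a 1) - 1) = 2 * (f (.xa 0) * f (.a 1)) - f (.xa 0) := by noncomm_ring
    _ = 2 * (f (.a 5) * f (.xa 0)) - f (.xa 0) := by rw [hxα]
    _ = -((2 * f (.a 1) - 1) * f (.xa 0)) := by rw [hβ]; noncomm_ring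
  have hjx : (2 * f (.a 1) - 1) * f (.xa 0) = -(f (.xa 0) * (2 * f (.a 1) - 1)) := by
    rw [hxj, neg_neg]
  set B : QuaternionAlgebra.Basis D (-1 : ℚ) 0 (-3 : ℚ) :=
    { i := f (.xa 0), j := 2 * f (.a 1) - 1, k := f (.xa 0) * (2 * f (.a 1) - 1)
      i_mul_i := by rw [hxx]; simp, j_mul_j := hyy, i_mul_j := rfl, j_mul_i := by rw [hjx]; simp } with hB
  have hBi : B.i = f (.xa 0) := by rw [hB]
  have hBj : B.j = 2 * f (.a 1) - 1 := by rw [hB]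
  have hmemα : f (.a 1) ∈ B.liftHom.range := by
    have h1 : ((2 : ℚ)⁻¹ • (B.j + 1)) ∈ B.liftHom.range :=
      Subalgebra.smul_mem _ (add_mem (j_mem_range B) (one_mem _)) _
    have h2 : (2 : ℚ)⁻¹ • (B.j + 1) = f (.a 1) := by
      rw [hBj, show (2 * f (.a 1) - 1) + 1 = 2 * f (.a 1) by noncomm_ring,
        show (2 : D) * f (.a 1) = (2 : ℚ) • f (.a 1) by rw [Algebra.smul_def]; norm_num,
        smul_smul]
      norm_num
    rwa [h2] at h1
  have hmem : ∀ γ : QuaternionGroup 3, f γ ∈ B.liftHom.range := by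
    refine all_pred (g := {.a 1, .xa 0}) (s := {1})
      (fun u v hu hv => by rw [map_mul]; exact mul_mem hu hv) 8 ?_ ?_ (by decide)
    · intro g hg
      rcases Finset.mem_insert.1 hg with rfl | hg
      · exact hmemα
      · rw [Finset.mem_singleton.1 hg, ← hBi]
        exact i_mem_range B
    · intro g hg
      rw [Finset.mem_singleton.1 hg, map_one]
      exact one_mem _
  have hS : ∀ s ∈ (fun u : Dˣ => (u : D)) '' (G : Set Dˣ), s ∈ B.liftHom.range := by
    rintro s ⟨u, hu, rfl⟩
    have h : ((u : Dˣ) : D) = f (e ⟨u, hu⟩) := by rw [hf, e.symm_apply_apply]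
    rw [show (fun u : Dˣ => (u : D)) u = ((u : Dˣ) : D) from rfl, h]
    exact hmem _
  have hα_adj : f (.a 1) ∈ Algebra.adjoin ℚ ((fun u : Dˣ => (u : D)) '' (G : Set Dˣ)) :=
    Algebra.subset_adjoin ⟨(e.symm (.a 1) : Dˣ), (e.symm (.a 1)).2, (hf _).symm⟩
  have hi : B.i ∈ Algebra.adjoin ℚ ((fun u : Dˣ => (u : D)) '' (G : Set Dˣ)) := by
    rw [hBi]
    exact Algebra.subset_adjoin ⟨(e.symm (.xa 0) : Dˣ), (e.symm (.xa 0)).2, (hf _).symm⟩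
  have hj : B.j ∈ Algebra.adjoin ℚ ((fun u : Dˣ => (u : D)) '' (G : Set Dˣ)) := by
    rw [hBj]
    refine sub_mem (mul_mem ?_ hα_adj) (one_mem _)
    have h2 := Subalgebra.natCast_mem
      (Algebra.adjoin ℚ ((fun u : Dˣ => (u : D)) '' (G : Set Dˣ))) 2
    push_cast at h2
    exact h2
  exact scaffold (h0_gen (by norm_num) (by norm_num)) B _ hS hi hj

theorem caseSL (G : Subgroup Dˣ)
    (e : ↥G ≃* Matrix.SpecialLinearGroup (Fin 2) (ZMod 3)) :
    Nonempty (↥(Algebra.adjoin ℚ ((fun u : Dˣ => (u : D)) '' (G : Set Dˣ))) ≃ₐ[ℚ] ℍ[ℚ,-1,-1]) := by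
  have hf : ∀ γ : SL23,
      ((Units.coeHom D).comp (G.subtype.comp e.symm.toMonoidHom)) γ = ((e.symm γ : Dˣ) : D) :=
    fun γ => rfl
  generalize hfd : (Units.coeHom D).comp (G.subtype.comp e.symm.toMonoidHom) = f
  rw [hfd] at hf
  have hfinj : Function.Injective f := by
    rw [← hfd]
    exact fun u v h => e.symm.injective (Subtype.ext (Units.ext h))
  have hfne : ∀ {u v : SL23}, u ≠ v → f u ≠ f v :=
    fun h h' => h (hfinj h')
  have hm1 : f Ng = -1 := by
    refine neg_one_of ?_ ?_
    · rw [← map_mul, show Ng * Ng = 1 by decide, map_one]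
    · rw [show (1 : D) = f 1 from (map_one f).symm]
      exact hfne (by decide)
  have hxxD : f Ig * f Ig = -1 := by
    rw [← map_mul, show Ig * Ig = Ng by decide, hm1]
  have hyyD : f Jg * f Jg = -1 := by
    rw [← map_mul, show Jg * Jg = Ng by decide, hm1]
  have hk : f Ig * f Jg = -(f Jg * f Ig) := by
    calc f Ig * f Jg = f (Ig * Jg) := (map_mul f _ _).symm
    _ = f (Ng * (Jg * Ig)) := by rw [show Ig * Jg = Ng * (Jg * Ig) by decide]
    _ = f Ng * (f Jg * f Ig) := by rw [map_mul, map_mul]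
    _ = -(f Jg * f Ig) := by rw [hm1, neg_mul, one_mul]
  have hjxi : f Jg * f Ig = -(f Ig * f Jg) := by rw [hk, neg_neg]
  set B : QuaternionAlgebra.Basis D (-1 : ℚ) 0 (-1 : ℚ) :=
    { i := f Ig, j := f Jg, k := f Ig * f Jg
      i_mul_i := by rw [hxxD]; simp
      j_mul_j := by rw [hyyD]; simp
      i_mul_j := rfl, j_mul_i := by rw [hjxi]; simp } with hB
  have hBi : B.i = f Ig := by rw [hB]
  have hBj : B.j = f Jg := by rw [hB]
  -- the order-3 element
  have hw3 : f Wg * f Wg * f Wg = 1 := by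
    rw [← map_mul, ← map_mul, show Wg * Wg * Wg = 1 by decide, map_one]
  have hwne : f Wg - 1 ≠ 0 := sub_ne_zero.2 (by
    rw [show (1 : D) = f 1 from (map_one f).symm]
    exact hfne (by decide))
  have hwsq : f Wg * f Wg = -1 - f Wg := by
    have expand : (f Wg - 1) * (f Wg * f Wg + f Wg + 1) = f Wg * f Wg * f Wg - 1 := by
      noncomm_ring
    have hfac : (f Wg - 1) * (f Wg * f Wg + f Wg + 1) = 0 := by
      rw [expand, hw3, sub_self]
    have h2 := (mul_eq_zero.1 hfac).resolve_left hwne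
    have h3 : f Wg * f Wg - (-1 - f Wg) = 0 := by rw [← h2]; noncomm_ring
    exact sub_eq_zero.1 h3
  have hwx : f Wg * f Ig = f Jg * f Wg := by
    rw [← map_mul, show Wg * Ig = Jg * Wg by decide, map_mul]
  have hwy : f Wg * f Jg = (f Ig * f Jg) * f Wg := by
    rw [← map_mul, show Wg * Jg = (Ig * Jg) * Wg by decide, map_mul, map_mul]
  have hwk : f Wg * (f Ig * f Jg) = f Ig * f Wg := by
    rw [← map_mul, ← map_mul, show Wg * (Ig * Jg) = Ig * Wg by decide, map_mul]
  obtain ⟨m, hm⟩ : ∃ m : D, m = f Ig + f Jg + f Ig * f Jg := ⟨_, rfl⟩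
  have hcomm : m * f Wg = f Wg * m := by
    rw [hm]
    calc (f Ig + f Jg + f Ig * f Jg) * f Wg
        = f Jg * f Wg + (f Ig * f Jg) * f Wg + f Ig * f Wg := by noncomm_ring
    _ = f Wg * f Ig + f Wg * f Jg + f Wg * (f Ig * f Jg) := by rw [hwx, hwy, hwk]
    _ = f Wg * (f Ig + f Jg + f Ig * f Jg) := by noncomm_ring
  have hkk : (f Ig * f Jg) * (f Ig * f Jg) = -1 := by
    calc (f Ig * f Jg) * (f Ig * f Jg) = f Ig * (f Jg * f Ig) * f Jg := by noncomm_ring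
    _ = f Ig * -(f Ig * f Jg) * f Jg := by rw [hjxi]
    _ = -((f Ig * f Ig) * (f Jg * f Jg)) := by noncomm_ring
    _ = -1 := by rw [hxxD, hyyD]; simp
  have hxk : (f Ig * f Jg) * f Ig = -(f Ig * (f Ig * f Jg)) := by
    calc (f Ig * f Jg) * f Ig = f Ig * (f Jg * f Ig) := by noncomm_ring
    _ = f Ig * -(f Ig * f Jg) := by rw [hjxi]
    _ = -(f Ig * (f Ig * f Jg)) := by noncomm_ring
  have hyk : f Jg * (f Ig * f Jg) = -((f Ig * f Jg) * f Jg) := by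
    calc f Jg * (f Ig * f Jg) = (f Jg * f Ig) * f Jg := by noncomm_ring
    _ = -(f Ig * f Jg) * f Jg := by rw [hjxi]
    _ = -((f Ig * f Jg) * f Jg) := by noncomm_ring
  have hm2 : m * m = (-3 : D) := by
    have expand : m * m = f Ig * f Ig + f Jg * f Jg + (f Ig * f Jg) * (f Ig * f Jg)
        + (f Ig * f Jg + f Jg * f Ig) + (f Ig * (f Ig * f Jg) + (f Ig * f Jg) * f Ig)
        + (f Jg * (f Ig * f Jg) + (f Ig * f Jg) * f Jg) := by
      rw [hm]; noncomm_ring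
    rw [expand, hxxD, hyyD, hkk, hjxi, hxk, hyk]
    noncomm_ring
    simp
  have hw'w' : (1 + 2 * f Wg) * (1 + 2 * f Wg) = (-3 : D) := by
    have expand : (1 + 2 * f Wg) * (1 + 2 * f Wg) = 4 * (f Wg * f Wg) + 4 * f Wg + 1 := by
      noncomm_ring
    rw [expand, hwsq]
    noncomm_ring
    simp
  have hcm : m * (1 + 2 * f Wg) = (1 + 2 * f Wg) * m := by
    calc m * (1 + 2 * f Wg) = m + 2 * (m * f Wg) := by noncomm_ring
    _ = m + 2 * (f Wg * m) := by rw [hcomm]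
    _ = (1 + 2 * f Wg) * m := by noncomm_ring
  have hfac : (m - (1 + 2 * f Wg)) * (m + (1 + 2 * f Wg)) = 0 := by
    have expand : (m - (1 + 2 * f Wg)) * (m + (1 + 2 * f Wg))
        = m * m + m * (1 + 2 * f Wg) - (1 + 2 * f Wg) * m - (1 + 2 * f Wg) * (1 + 2 * f Wg) := by
      noncomm_ring
    rw [expand, hcm, hm2, hw'w']
    noncomm_ring
  have hmmem : m ∈ B.liftHom.range := by
    rw [hm, ← hBi, ← hBj]
    exact add_mem (add_mem (i_mem_range B) (j_mem_range B))
      (mul_mem (i_mem_range B) (j_mem_range B))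
  have htwo : ∀ z : D, (2 : ℚ)⁻¹ • (2 * z) = z := by
    intro z
    rw [show (2 : D) * z = (2 : ℚ) • z by rw [Algebra.smul_def]; norm_num, smul_smul]
    norm_num
  have hwmem : f Wg ∈ B.liftHom.range := by
    rcases mul_eq_zero.1 hfac with h | h
    · have h' : m = 1 + 2 * f Wg := sub_eq_zero.1 h
      have h2 : (2 : ℚ)⁻¹ • (m - 1) = f Wg := by
        rw [h', show 1 + 2 * f Wg - 1 = 2 * f Wg by noncomm_ring, htwo]
      rw [← h2]
      exact Subalgebra.smul_mem _ (sub_mem hmmem (one_mem _)) _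
    · have h' : m = -(1 + 2 * f Wg) := eq_neg_of_add_eq_zero_left h
      have h2 : (2 : ℚ)⁻¹ • (-m - 1) = f Wg := by
        rw [h', show -(-(1 + 2 * f Wg)) - 1 = 2 * f Wg by noncomm_ring, htwo]
      rw [← h2]
      exact Subalgebra.smul_mem _ (sub_mem (neg_mem hmmem) (one_mem _)) _
  have hmem : ∀ γ : SL23, f γ ∈ B.liftHom.range := by
    refine all_pred (g := {Ig, Jg, Wg}) (s := {1})
      (fun u v hu hv => by rw [map_mul]; exact mul_mem hu hv) 8 ?_ ?_ (by decide)
    · intro g hg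
      rcases Finset.mem_insert.1 hg with rfl | hg
      · rw [← hBi]; exact i_mem_range B
      · rcases Finset.mem_insert.1 hg with rfl | hg
        · rw [← hBj]; exact j_mem_range B
        · rw [Finset.mem_singleton.1 hg]
          exact hwmem
    · intro g hg
      rw [Finset.mem_singleton.1 hg, map_one]
      exact one_mem _
  have hS : ∀ s ∈ (fun u : Dˣ => (u : D)) '' (G : Set Dˣ), s ∈ B.liftHom.range := by
    rintro s ⟨u, hu, rfl⟩
    have h : ((u : Dˣ) : D) = f (e ⟨u, hu⟩) := by rw [hf, e.symm_apply_apply]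
    rw [show (fun u : Dˣ => (u : D)) u = ((u : Dˣ) : D) from rfl, h]
    exact hmem _
  have hi : B.i ∈ Algebra.adjoin ℚ ((fun u : Dˣ => (u : D)) '' (G : Set Dˣ)) := by
    rw [hBi]
    exact Algebra.subset_adjoin ⟨(e.symm Ig : Dˣ), (e.symm Ig).2, (hf _).symm⟩
  have hj : B.j ∈ Algebra.adjoin ℚ ((fun u : Dˣ => (u : D)) '' (G : Set Dˣ)) := by
    rw [hBj]
    exact Algebra.subset_adjoin ⟨(e.symm Jg : Dˣ), (e.symm Jg).2, (hf _).symm⟩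
  exact scaffold (h0_gen (by norm_num) (by norm_num)) B _ hS hi hj

end Statement16

/-- Let `D` be a finite-dimensional division `ℚ`-algebra and `G` a finite
subgroup of `Dˣ`. If `G ≅ Q₈` or `G ≅ SL(2,3)` then the `ℚ`-subalgebra of `D` generated by
`G` is isomorphic to `ℍ[ℚ,-1,-1]`; if `G` is the dicyclic group of order 12 then it is
isomorphic to `ℍ[ℚ,-1,-3]`. -/
theorem span_of_finite_subgroup_of_division_algebra
    (D : Type*) [DivisionRing D] [Algebra ℚ D] [FiniteDimensional ℚ D]
    (G : Subgroup Dˣ) (hG : Finite ↥G) :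
    ((Nonempty (↥G ≃* QuaternionGroup 2) ∨
        Nonempty (↥G ≃* Matrix.SpecialLinearGroup (Fin 2) (ZMod 3))) →
      Nonempty (↥(Algebra.adjoin ℚ ((fun u : Dˣ => (u : D)) '' (G : Set Dˣ)))
        ≃ₐ[ℚ] ℍ[ℚ, -1, -1])) ∧
    (Nonempty (↥G ≃* QuaternionGroup 3) →
      Nonempty (↥(Algebra.adjoin ℚ ((fun u : Dˣ => (u : D)) '' (G : Set Dˣ)))
        ≃ₐ[ℚ] ℍ[ℚ, -1, -3])) := by
  constructor
  · intro h
    rcases h with h | h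
    · obtain ⟨e⟩ := h
      exact Statement16.caseQ8 G e
    · obtain ⟨e⟩ := h
      exact Statement16.caseSL G e
  · intro h
    obtain ⟨e⟩ := h
    exact Statement16.caseDic G e
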